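/- arXiv:math/0311339 — 3 statements merged into one kernel-verified Lean document; each statement's English description precedes it below -/
import Mathlib

section
/- For every k ≥ 0, h maps n̄^k M into n̄^k M, and every eigenvalue α of the endomorphism induced by h on the finite-dimensional space n̄^k M / n̄^{k+1} M can be written as α = s + j, where s is an eigenvalue of the endomorphism induced by h on M/n̄ M and j is an integer with j ≤ −k. -/
set_option linter.unusedSectionVars false
set_option maxHeartbeats 1000000

noncomputable section

namespace GeomJacquet

variable (g : Type*) [LieRing g] [LieAlgebra ℂ g]

/-- The nilpotent subalgebra `n̄ ⊆ g`: the sum of the eigenspaces of `ad H` with negative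
(integer) eigenvalues. -/
def nbar (H : g) : Submodule ℂ g :=
  ⨆ z : {z : ℤ // z < 0}, Module.End.eigenspace (LieAlgebra.ad ℂ g H) ((z : ℤ) : ℂ)

/-- `ad H` is diagonalizable with all eigenvalues in `ℤ`. -/
def IsIntDiagonalizable (H : g) : Prop :=
  (⨆ z : ℤ, Module.End.eigenspace (LieAlgebra.ad ℂ g H) (z : ℂ)) = ⊤

variable (M : Type*) [AddCommGroup M] [Module ℂ M] [LieRingModule g M] [LieModule ℂ g M]

/-- The `n̄`-adic filtration `n̄^k M` on a representation `M` of `g`. -/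
def fil (H : g) : ℕ → Submodule ℂ M
  | 0 => ⊤
  | k + 1 => Submodule.span ℂ
      {m : M | ∃ x ∈ nbar g H, ∃ v ∈ fil H k, ⁅x, v⁆ = m}

/-- `M` is finitely generated as a module over `U(n̄)` (acting through the `g`-action):
there is a finite subset `S ⊆ M` such that the only `ℂ`-subspace of `M` containing `S` and
stable under the action of `n̄` is `M` itself. -/
def IsUnbarFG (H : g) : Prop :=
  ∃ S : Finset M, ∀ W : Submodule ℂ M, (↑S : Set M) ⊆ W →
    (∀ x ∈ nbar g H, ∀ m ∈ W, ⁅x, m⁆ ∈ W) → W = ⊤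

theorem lie_mem_nbar (H : g) {x : g} (hx : x ∈ nbar g H) : ⁅H, x⁆ ∈ nbar g H := by
  revert hx
  refine fun hx => Submodule.iSup_induction _ (motive := fun y => ⁅H, y⁆ ∈ nbar g H) hx ?_ ?_ ?_
  · rintro ⟨z, hz⟩ y hy
    have : ⁅H, y⁆ = ((z : ℤ) : ℂ) • y := by
      have := (Module.End.mem_eigenspace_iff).1 hy
      simpa [LieAlgebra.ad_apply] using this
    rw [this]
    exact Submodule.smul_mem _ _ (le_iSup (fun z : {z : ℤ // z < 0} =>
      Module.End.eigenspace (LieAlgebra.ad ℂ g H) ((z : ℤ) : ℂ)) ⟨z, hz⟩ hy)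
  · simp
  · intro a b ha hb
    rw [lie_add]
    exact Submodule.add_mem _ ha hb

theorem lie_H_mem_fil (H : g) (k : ℕ) : ∀ m ∈ fil g M H k, ⁅H, m⁆ ∈ fil g M H k := by
  induction k with
  | zero => intro m _; trivial
  | succ k ih =>
    intro m hm
    refine Submodule.span_induction ?_ ?_ ?_ ?_ hm
    · rintro m ⟨x, hx, v, hv, rfl⟩
      rw [leibniz_lie]
      exact Submodule.add_mem _
        (Submodule.subset_span ⟨⁅H, x⁆, lie_mem_nbar g H hx, v, hv, rfl⟩)
        (Submodule.subset_span ⟨x, hx, ⁅H, v⁆, ih v hv, rfl⟩)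
    · simp
    · intro a b _ _ ha hb; rw [lie_add]; exact Submodule.add_mem _ ha hb
    · intro c a _ ha; rw [lie_smul]; exact Submodule.smul_mem _ c ha

theorem fil_succ_le (H : g) (k : ℕ) : fil g M H (k + 1) ≤ fil g M H k := by
  induction k with
  | zero => exact le_top
  | succ k ih =>
    refine Submodule.span_le.2 ?_
    rintro m ⟨x, hx, v, hv, rfl⟩
    exact Submodule.subset_span ⟨x, hx, v, ih hv, rfl⟩

/-- The endomorphism of `M/n̄^k M` induced by (the action of) `h`. -/
def hQuot (H : g) (k : ℕ) : Module.End ℂ (M ⧸ fil g M H k) :=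
  Submodule.mapQ _ _ ((LieModule.toEnd ℂ g M) H)
    (fun m hm => by
      simpa [Submodule.mem_comap, LieModule.toEnd_apply_apply] using
        lie_H_mem_fil g M H k m hm)

/-- The canonical projection `M/n̄^(k+1) M → M/n̄^k M`. -/
def proj (H : g) (k : ℕ) : (M ⧸ fil g M H (k + 1)) →ₗ[ℂ] M ⧸ fil g M H k :=
  Submodule.mapQ _ _ LinearMap.id (fun _ hm => fil_succ_le g M H k hm)

/-- The `n̄`-adic completion `M̂ = lim_k M/n̄^k M`, realized as the space of compatible
sequences in `Π k, M/n̄^k M`. -/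
def completion (H : g) : Submodule ℂ (Π k : ℕ, M ⧸ fil g M H k) where
  carrier := {v | ∀ k, proj g M H k (v (k + 1)) = v k}
  zero_mem' := by intro k; simp
  add_mem' := by intro u v hu hv k; simp [map_add, hu k, hv k]
  smul_mem' := by intro c v hv k; simp [map_smul, hv k]

theorem proj_hQuot (H : g) (k : ℕ) (w : M ⧸ fil g M H (k + 1)) :
    proj g M H k (hQuot g M H (k + 1) w) = hQuot g M H k (proj g M H k w) := by
  obtain ⟨m, rfl⟩ := Submodule.Quotient.mk_surjective _ w
  simp [proj, hQuot, Submodule.mapQ_apply]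

/-- The endomorphism `ĥ` of the completion `M̂` induced componentwise by `h`. -/
def hhat (H : g) : Module.End ℂ (completion g M H) where
  toFun v := ⟨fun k => hQuot g M H k (v.1 k), by
    intro k; rw [proj_hQuot, v.2 k]⟩
  map_add' u v := by ext k; simp
  map_smul' c v := by ext k; simp

/-- The canonical map `M → M̂`. -/
def toCompletion (H : g) : M →ₗ[ℂ] completion g M H where
  toFun m := ⟨fun k => Submodule.Quotient.mk m, by
    intro k; simp [proj, Submodule.mapQ_apply]⟩
  map_add' u v := by ext k; simp
  map_smul' c v := by ext k; simp

/-- `E_α ⊆ M̂`: the generalized `α`-eigenspace `⋃_N ker((ĥ - α)^N)` of `ĥ`. -/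
def E (H : g) (α : ℂ) : Submodule ℂ (completion g M H) :=
  Module.End.maxGenEigenspace (hhat g M H) α


theorem lie_nbar_fil_mem (H : g) (k : ℕ) {x : g} (hx : x ∈ nbar g H) {m : M}
    (hm : m ∈ fil g M H k) : ⁅x, m⁆ ∈ fil g M H (k + 1) :=
  Submodule.subset_span ⟨x, hx, m, hm, rfl⟩

theorem span_sup_fil_one (H : g) (hFG : IsUnbarFG g M H) :
    ∃ S : Finset M, Submodule.span ℂ (S : Set M) ⊔ fil g M H 1 = ⊤ := by
  obtain ⟨S, hS⟩ := hFG
  refine ⟨S, hS _ (fun s hs => Submodule.mem_sup_left (Submodule.subset_span hs)) ?_⟩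
  intro x hx m hm
  obtain ⟨a, ha, b, hb, rfl⟩ := Submodule.mem_sup.1 hm
  rw [lie_add]
  exact Submodule.add_mem _
    (Submodule.mem_sup_right (lie_nbar_fil_mem g M H 0 hx trivial))
    (Submodule.mem_sup_right (fil_succ_le g M H 1 (lie_nbar_fil_mem g M H 1 hx hb)))

theorem finiteDimensional_quot_one (H : g) (hFG : IsUnbarFG g M H) :
    FiniteDimensional ℂ (M ⧸ fil g M H 1) := by
  classical
  obtain ⟨S, hS⟩ := span_sup_fil_one g M H hFG
  refine Module.finite_def.mpr ⟨S.image (fil g M H 1).mkQ, ?_⟩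
  rw [Finset.coe_image, Submodule.span_image]
  rw [eq_top_iff]
  rintro q -
  obtain ⟨m, rfl⟩ := (fil g M H 1).mkQ_surjective q
  have hm : m ∈ Submodule.span ℂ (S : Set M) ⊔ fil g M H 1 := hS ▸ Submodule.mem_top
  obtain ⟨a, ha, b, hb, rfl⟩ := Submodule.mem_sup.1 hm
  have : (fil g M H 1).mkQ (a + b) = (fil g M H 1).mkQ a := by
    rw [map_add, show (fil g M H 1).mkQ b = 0 from (Submodule.Quotient.mk_eq_zero _).2 hb, add_zero]
  rw [this]
  exact Submodule.mem_map_of_mem ha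

def phi (H : g) (k : ℕ) (x : g) (hx : x ∈ nbar g H) :
    (M ⧸ fil g M H (k + 1)) →ₗ[ℂ] M ⧸ fil g M H (k + 2) :=
  Submodule.mapQ _ _ ((LieModule.toEnd ℂ g M) x)
    (fun m hm => by
      simpa [Submodule.mem_comap, LieModule.toEnd_apply_apply] using
        lie_nbar_fil_mem g M H (k + 1) hx hm)

theorem phi_comm (H : g) (k : ℕ) {x : g} (hx : x ∈ nbar g H) {c : ℂ}
    (hcx : ⁅H, x⁆ = c • x) (w : M ⧸ fil g M H (k + 1)) :
    hQuot g M H (k + 2) (phi g M H k x hx w)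
      = phi g M H k x hx (hQuot g M H (k + 1) w) + c • phi g M H k x hx w := by
  obtain ⟨m, rfl⟩ := Submodule.Quotient.mk_surjective _ w
  simp only [hQuot, phi, Submodule.mapQ_apply, LieModule.toEnd_apply_apply]
  rw [leibniz_lie, hcx, smul_lie]
  rw [Submodule.Quotient.mk_add, Submodule.Quotient.mk_smul]
  exact add_comm _ _

theorem phi_maxGen (H : g) (k : ℕ) {x : g} (hx : x ∈ nbar g H) {c : ℂ}
    (hcx : ⁅H, x⁆ = c • x) {μ : ℂ} {w : M ⧸ fil g M H (k + 1)}
    (hw : w ∈ Module.End.maxGenEigenspace (hQuot g M H (k + 1)) μ) :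
    phi g M H k x hx w ∈ Module.End.maxGenEigenspace (hQuot g M H (k + 2)) (μ + c) := by
  rw [Module.End.mem_maxGenEigenspace] at hw ⊢
  obtain ⟨N, hN⟩ := hw
  refine ⟨N, ?_⟩
  have key : ∀ (n : ℕ) (u : M ⧸ fil g M H (k + 1)),
      ((hQuot g M H (k + 2) - (μ + c) • 1) ^ n) (phi g M H k x hx u)
        = phi g M H k x hx (((hQuot g M H (k + 1) - μ • 1) ^ n) u) := by
    intro n
    induction n with
    | zero => intro u; simp
    | succ n ih =>
      intro u
      rw [pow_succ, Module.End.mul_apply]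
      have step : (hQuot g M H (k + 2) - (μ + c) • 1) (phi g M H k x hx u)
          = phi g M H k x hx ((hQuot g M H (k + 1) - μ • 1) u) := by
        simp only [LinearMap.sub_apply, LinearMap.smul_apply, Module.End.one_apply, map_sub,
          map_smul, phi_comm g M H k hx hcx u]
        rw [add_smul]
        abel
      rw [step, ih, ← Module.End.mul_apply, ← pow_succ]
  rw [key, hN, map_zero]

def Tset (H : g) (k : ℕ) : Set ℂ :=
  {α | ∃ (s : ℂ) (j : ℤ), Module.End.HasEigenvalue (hQuot g M H 1) s ∧ j ≤ -(k : ℤ) ∧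
    α = s + (j : ℂ)}

theorem graded_le_iSup (H : g) (hFG : IsUnbarFG g M H) (k : ℕ) :
    (fil g M H k).map (fil g M H (k + 1)).mkQ ≤
      ⨆ ν : Tset g M H k, Module.End.maxGenEigenspace (hQuot g M H (k + 1)) (ν : ℂ) := by
  induction k with
  | zero =>
    have : FiniteDimensional ℂ (M ⧸ fil g M H 1) := finiteDimensional_quot_one g M H hFG
    rw [show fil g M H 0 = ⊤ from rfl, Submodule.map_top, Submodule.range_mkQ]
    rw [← Module.End.iSup_maxGenEigenspace_eq_top (hQuot g M H 1)]
    refine iSup_le fun μ => ?_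
    by_cases hμ : Module.End.maxGenEigenspace (hQuot g M H 1) μ = ⊥
    · rw [hμ]; exact bot_le
    · have hev : Module.End.HasEigenvalue (hQuot g M H 1) μ :=
        Module.End.HasUnifEigenvalue.lt zero_lt_one hμ
      exact le_iSup_of_le ⟨μ, μ, 0, hev, by simp, by simp⟩ le_rfl
  | succ k ih =>
    rw [Submodule.map_le_iff_le_comap]
    refine Submodule.span_le.2 ?_
    rintro m ⟨x, hx, v, hv, rfl⟩
    rw [SetLike.mem_coe, Submodule.mem_comap, Submodule.mkQ_apply]
    set R := ⨆ ν : Tset g M H (k + 1),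
      Module.End.maxGenEigenspace (hQuot g M H (k + 2)) (ν : ℂ) with hR
    refine Submodule.iSup_induction _
      (motive := fun y => (Submodule.Quotient.mk ⁅y, v⁆ : M ⧸ fil g M H (k + 2)) ∈ R) hx ?_ ?_ ?_
    · rintro ⟨z, hz⟩ y hy
      have hcy : ⁅H, y⁆ = ((z : ℤ) : ℂ) • y := by
        have := (Module.End.mem_eigenspace_iff).1 hy
        simpa [LieAlgebra.ad_apply] using this
      have hynbar : y ∈ nbar g H :=
        le_iSup (fun z : {z : ℤ // z < 0} =>
          Module.End.eigenspace (LieAlgebra.ad ℂ g H) ((z : ℤ) : ℂ)) ⟨z, hz⟩ hy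
      have hvq : (Submodule.Quotient.mk v : M ⧸ fil g M H (k + 1)) ∈
          ⨆ ν : Tset g M H k,
            Module.End.maxGenEigenspace (hQuot g M H (k + 1)) (ν : ℂ) :=
        ih ⟨v, hv, rfl⟩
      have heq : (Submodule.Quotient.mk ⁅y, v⁆ : M ⧸ fil g M H (k + 2))
          = phi g M H k y hynbar (Submodule.Quotient.mk v) := by
        simp [phi, Submodule.mapQ_apply, LieModule.toEnd_apply_apply]
      rw [heq]
      refine Submodule.iSup_induction _
        (motive := fun w => phi g M H k y hynbar w ∈ R) hvq ?_ ?_ ?_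
      · rintro ⟨μ, s, j, hs, hj, rfl⟩ w hw
        have hmem := phi_maxGen g M H k hynbar hcy hw
        have hT : (s + (j : ℂ)) + ((z : ℤ) : ℂ) ∈ Tset g M H (k + 1) := by
          refine ⟨s, j + z, hs, by omega, by push_cast; ring⟩
        exact le_iSup (fun ν : Tset g M H (k + 1) =>
          Module.End.maxGenEigenspace (hQuot g M H (k + 2)) (ν : ℂ))
          ⟨_, hT⟩ hmem
      · simp
      · intro a b ha hb
        rw [map_add]
        exact Submodule.add_mem _ ha hb
    · show (Submodule.Quotient.mk ⁅(0 : g), v⁆ : M ⧸ fil g M H (k + 2)) ∈ R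
      rw [zero_lie]
      exact Submodule.zero_mem _
    · intro a b ha hb
      show (Submodule.Quotient.mk ⁅a + b, v⁆ : M ⧸ fil g M H (k + 2)) ∈ R
      rw [add_lie, Submodule.Quotient.mk_add]
      exact Submodule.add_mem _ ha hb

theorem eigenvalue_in_Tset (H : g) (hFG : IsUnbarFG g M H) (k : ℕ) {α : ℂ}
    {v : M ⧸ fil g M H (k + 1)} (hvmem : v ∈ (fil g M H k).map (fil g M H (k + 1)).mkQ)
    (hv0 : v ≠ 0) (hveq : hQuot g M H (k + 1) v = α • v) : α ∈ Tset g M H k := by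
  by_contra hα
  have hvsup := graded_le_iSup g M H hFG k hvmem
  have hvm : v ∈ Module.End.maxGenEigenspace (hQuot g M H (k + 1)) α := by
    rw [Module.End.mem_maxGenEigenspace]
    exact ⟨1, by rw [pow_one]; simp [LinearMap.sub_apply, hveq]⟩
  have hind := Module.End.independent_maxGenEigenspace (hQuot g M H (k + 1))
  have hdisj := hind α
  have hle : (⨆ ν : Tset g M H k,
      Module.End.maxGenEigenspace (hQuot g M H (k + 1)) (ν : ℂ)) ≤
      ⨆ (ν : ℂ) (_ : ν ≠ α), Module.End.maxGenEigenspace (hQuot g M H (k + 1)) ν := by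
    refine iSup_le fun ν => ?_
    exact le_iSup₂_of_le (ν : ℂ) (fun h => hα (h ▸ ν.2)) le_rfl
  exact hv0 (Submodule.disjoint_def.1 hdisj v hvm (hle hvsup))

/-- For every `k ≥ 0`, `h` maps `n̄^k M` into `n̄^k M`, and every eigenvalue `α` of the
endomorphism induced by `h` on `n̄^k M / n̄^(k+1) M` (realized as the image of `n̄^k M` in
`M / n̄^(k+1) M`, on which the endomorphism induced by `h` acts) is of the form `α = s + j`
with `s` an eigenvalue of the endomorphism induced by `h` on `M/n̄ M` and `j ∈ ℤ`, `j ≤ -k`. -/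
theorem fil_graded_eigenvalues
    [FiniteDimensional ℂ g] (H : g) (hdiag : IsIntDiagonalizable g H)
    (hFG : IsUnbarFG g M H) (k : ℕ) :
    (∀ m ∈ fil g M H k, ⁅H, m⁆ ∈ fil g M H k) ∧
    (∀ α : ℂ,
      (∃ v ∈ (fil g M H k).map (fil g M H (k + 1)).mkQ,
        v ≠ 0 ∧ hQuot g M H (k + 1) v = α • v) →
      ∃ (s : ℂ) (j : ℤ), Module.End.HasEigenvalue (hQuot g M H 1) s ∧
        j ≤ -(k : ℤ) ∧ α = s + (j : ℂ)) := by
  refine ⟨lie_H_mem_fil g M H k, ?_⟩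
  rintro α ⟨v, hvmem, hv0, hveq⟩
  exact eigenvalue_in_Tset g M H hFG k hvmem hv0 hveq

end GeomJacquet
end
end

section
/- For every α ∈ ℂ there exists K ≥ 0 such that for all k ≥ K, the canonical projection M/n̄^{k+1} M → M/n̄^k M restricts to a linear isomorphism from the generalized α-eigenspace of the endomorphism induced by h on M/n̄^{k+1} M onto the generalized α-eigenspace of the endomorphism induced by h on M/n̄^k M. -/
set_option linter.unusedSectionVars false

noncomputable section

namespace GeomJacquet

variable (g : Type*) [LieRing g] [LieAlgebra ℂ g]

variable (M : Type*) [AddCommGroup M] [Module ℂ M] [LieRingModule g M] [LieModule ℂ g M]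

section PlistAux

open Polynomial

variable {V W : Type*} [AddCommGroup V] [Module ℂ V] [AddCommGroup W] [Module ℂ W]

/-- The polynomial `∏ (X - β)` over a list of roots. -/
def pOf (L : List ℂ) : Polynomial ℂ := (L.map (fun β => X - C β)).prod

theorem pOf_cons (β : ℂ) (L : List ℂ) : pOf (β :: L) = (X - C β) * pOf L := by
  simp [pOf]

theorem pOf_append (L₁ L₂ : List ℂ) : pOf (L₁ ++ L₂) = pOf L₁ * pOf L₂ := by
  simp [pOf]

theorem pOf_replicate (N : ℕ) (α : ℂ) : pOf (List.replicate N α) = (X - C α) ^ N := by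
  simp [pOf, List.map_replicate, List.prod_replicate]

/-- The operator `∏ (T - β)` over a list of roots. -/
def plist (T : Module.End ℂ V) (L : List ℂ) : Module.End ℂ V := aeval T (pOf L)

theorem plist_nil (T : Module.End ℂ V) (v : V) : plist T [] v = v := by
  simp [plist, pOf]

theorem aeval_X_sub_C_apply (T : Module.End ℂ V) (β : ℂ) (v : V) :
    aeval T (X - C β) v = T v - β • v := by
  simp [map_sub, aeval_X, aeval_C, Module.algebraMap_end_eq_smul_id]

theorem plist_cons_apply (T : Module.End ℂ V) (β : ℂ) (L : List ℂ) (v : V) :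
    plist T (β :: L) v = plist T L (T v - β • v) := by
  have h : pOf (β :: L) = pOf L * (X - C β) := by rw [pOf_cons, mul_comm]
  rw [plist, h, map_mul, Module.End.mul_apply, aeval_X_sub_C_apply]
  rfl

theorem plist_append_apply (T : Module.End ℂ V) (L₁ L₂ : List ℂ) (v : V) :
    plist T (L₁ ++ L₂) v = plist T L₁ (plist T L₂ v) := by
  rw [plist, pOf_append, map_mul, Module.End.mul_apply]
  rfl

theorem plist_append_apply' (T : Module.End ℂ V) (L₁ L₂ : List ℂ) (v : V) :
    plist T (L₁ ++ L₂) v = plist T L₂ (plist T L₁ v) := by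
  rw [plist, pOf_append, mul_comm, map_mul, Module.End.mul_apply]
  rfl

theorem plist_replicate (T : Module.End ℂ V) (N : ℕ) (α : ℂ) :
    plist T (List.replicate N α) = (T - α • 1) ^ N := by
  have : aeval T (X - C α) = T - α • 1 := by
    ext v
    rw [aeval_X_sub_C_apply]
    rfl
  rw [plist, pOf_replicate, map_pow, this]

theorem plist_comm_map (f : V →ₗ[ℂ] W) (T' : Module.End ℂ V) (T : Module.End ℂ W)
    (h : ∀ v, f (T' v) = T (f v)) (L : List ℂ) (v : V) :
    f (plist T' L v) = plist T L (f v) := by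
  induction L generalizing v with
  | nil => rw [plist_nil, plist_nil]
  | cons β L ih =>
    rw [plist_cons_apply, ih, map_sub, map_smul, h, plist_cons_apply]

theorem exists_re_bound (L : List ℂ) : ∃ r : ℝ, ∀ β ∈ L, β.re ≤ r := by
  induction L with
  | nil => exact ⟨0, by simp⟩
  | cons β L ih =>
    obtain ⟨r, hr⟩ := ih
    exact ⟨max β.re r, by
      intro γ hγ
      rcases List.mem_cons.1 hγ with rfl | hγ
      · exact le_max_left _ _
      · exact (hr γ hγ).trans (le_max_right _ _)⟩

theorem isCoprime_pow_pOf {α : ℂ} (N : ℕ) (L : List ℂ) (hL : ∀ β ∈ L, β ≠ α) :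
    IsCoprime ((X - C α) ^ N) (pOf L) := by
  refine IsCoprime.pow_left ?_
  induction L with
  | nil => exact isCoprime_one_right
  | cons β L ih =>
    rw [pOf_cons]
    refine IsCoprime.mul_right ?_ (ih fun γ hγ => hL γ (List.mem_cons_of_mem _ hγ))
    have hβ : β - α ≠ 0 := sub_ne_zero.2 (hL β List.mem_cons_self)
    refine ⟨C (β - α)⁻¹, -(C (β - α)⁻¹), ?_⟩
    have : C (β - α)⁻¹ * (X - C α) + -(C (β - α)⁻¹) * (X - C β)
        = C (β - α)⁻¹ * (C β - C α) := by ring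
    rw [this, ← C_sub, ← C_mul, inv_mul_cancel₀ hβ, C_1]

end PlistAux
section KillerAux

open Polynomial

variable [FiniteDimensional ℂ g]

theorem mkQ_toEnd (H : g) (k : ℕ) (m : M) :
    (fil g M H k).mkQ (LieModule.toEnd ℂ g M H m) = hQuot g M H k ((fil g M H k).mkQ m) := by
  simp [hQuot, Submodule.mapQ_apply, Submodule.mkQ_apply]

theorem mkQ_plist (H : g) (k : ℕ) (L : List ℂ) (m : M) :
    (fil g M H k).mkQ (plist (LieModule.toEnd ℂ g M H) L m)
      = plist (hQuot g M H k) L ((fil g M H k).mkQ m) :=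
  plist_comm_map _ _ _ (mkQ_toEnd g M H k) L m

theorem proj_plist (H : g) (k : ℕ) (L : List ℂ) (w : M ⧸ fil g M H (k + 1)) :
    proj g M H k (plist (hQuot g M H (k + 1)) L w)
      = plist (hQuot g M H k) L (proj g M H k w) :=
  plist_comm_map _ _ _ (proj_hQuot g M H k) L w

theorem plist_fil_mem (H : g) (k : ℕ) (L : List ℂ) {m : M} (hm : m ∈ fil g M H k) :
    plist (LieModule.toEnd ℂ g M H) L m ∈ fil g M H k := by
  induction L generalizing m with
  | nil => rw [plist_nil]; exact hm
  | cons β L ih =>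
    rw [plist_cons_apply]
    refine ih (Submodule.sub_mem _ ?_ (Submodule.smul_mem _ _ hm))
    simpa [LieModule.toEnd_apply_apply] using lie_H_mem_fil g M H k m hm

theorem proj_mem_maxGen (H : g) (k : ℕ) (μ : ℂ) {w : M ⧸ fil g M H (k + 1)}
    (hw : w ∈ Module.End.maxGenEigenspace (hQuot g M H (k + 1)) μ) :
    proj g M H k w ∈ Module.End.maxGenEigenspace (hQuot g M H k) μ := by
  rw [Module.End.mem_maxGenEigenspace] at hw ⊢
  obtain ⟨N, hN⟩ := hw
  refine ⟨N, ?_⟩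
  rw [← plist_replicate] at hN ⊢
  rw [← proj_plist, hN, map_zero]

theorem exists_Zlist (H : g) :
    ∃ Z : List ℤ, (∀ z ∈ Z, z < 0) ∧
      ∀ z : ℤ, z < 0 → Module.End.eigenspace (LieAlgebra.ad ℂ g H) ((z : ℤ) : ℂ) ≠ ⊥ →
        z ∈ Z := by
  have hne : minpoly ℂ (LieAlgebra.ad ℂ g H) ≠ 0 :=
    minpoly.ne_zero (Algebra.IsIntegral.isIntegral (R := ℂ) (LieAlgebra.ad ℂ g H))
  have hroots := Polynomial.finite_setOf_isRoot hne
  have hpre : ((fun z : ℤ => (z : ℂ)) ⁻¹'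
      {x | (minpoly ℂ (LieAlgebra.ad ℂ g H)).IsRoot x}).Finite :=
    Set.Finite.preimage (Function.Injective.injOn Int.cast_injective) hroots
  have hfin : {z : ℤ | z < 0 ∧
      Module.End.eigenspace (LieAlgebra.ad ℂ g H) ((z : ℤ) : ℂ) ≠ ⊥}.Finite := by
    refine hpre.subset ?_
    rintro z ⟨hz, hbot⟩
    exact Module.End.hasEigenvalue_iff_isRoot.mp (Module.End.hasEigenvalue_iff.2 hbot)
  refine ⟨hfin.toFinset.toList, ?_, ?_⟩
  · intro z hz
    rw [Finset.mem_toList, Set.Finite.mem_toFinset] at hz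
    exact hz.1
  · intro z hz hbot
    rw [Finset.mem_toList, Set.Finite.mem_toFinset]
    exact ⟨hz, hbot⟩

theorem plist_shift (H : g) {x : g} {z0 : ℂ} (hx : ⁅H, x⁆ = z0 • x) (L : List ℂ) (v : M) :
    plist (LieModule.toEnd ℂ g M H) (L.map (· + z0)) ⁅x, v⁆
      = ⁅x, plist (LieModule.toEnd ℂ g M H) L v⁆ := by
  induction L generalizing v with
  | nil => rw [List.map_nil, plist_nil, plist_nil]
  | cons β L ih =>
    rw [List.map_cons, plist_cons_apply, plist_cons_apply]
    have key : LieModule.toEnd ℂ g M H ⁅x, v⁆ - (β + z0) • ⁅x, v⁆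
        = ⁅x, LieModule.toEnd ℂ g M H v - β • v⁆ := by
      have h1 : LieModule.toEnd ℂ g M H ⁅x, v⁆
          = ⁅⁅H, x⁆, v⁆ + ⁅x, LieModule.toEnd ℂ g M H v⁆ := by
        rw [LieModule.toEnd_apply_apply, LieModule.toEnd_apply_apply, leibniz_lie]
      rw [h1, hx, smul_lie, lie_sub, lie_smul]
      module
    rw [key, ih]

theorem flatMap_kill (H : g) (k : ℕ) (L : List ℂ)
    (hL : ∀ m ∈ fil g M H k, plist (LieModule.toEnd ℂ g M H) L m ∈ fil g M H (k + 1))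
    {x : g} (hxn : x ∈ nbar g H) {z0 : ℤ} (hxlie : ⁅H, x⁆ = ((z0 : ℤ) : ℂ) • x)
    (Z : List ℤ) (hz0Z : z0 ∈ Z) {v : M} (hv : v ∈ fil g M H k) :
    plist (LieModule.toEnd ℂ g M H) (Z.flatMap fun (z : ℤ) => L.map (· + (z : ℂ))) ⁅x, v⁆
      ∈ fil g M H (k + 2) := by
  induction Z with
  | nil => cases hz0Z
  | cons z Z ih =>
    rw [List.flatMap_cons]
    by_cases hzz : z = z0
    · subst hzz
      rw [plist_append_apply', plist_shift g M H hxlie L v]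
      refine plist_fil_mem g M H (k + 2) _ ?_
      exact Submodule.subset_span ⟨x, hxn, _, hL v hv, rfl⟩
    · have hz0Z' : z0 ∈ Z := by
        rcases List.mem_cons.1 hz0Z with h | h
        · exact absurd h.symm hzz
        · exact h
      rw [plist_append_apply]
      exact plist_fil_mem g M H (k + 2) _ (ih hz0Z')

theorem step_kill (H : g) (k : ℕ) (L : List ℂ)
    (hL : ∀ m ∈ fil g M H k, plist (LieModule.toEnd ℂ g M H) L m ∈ fil g M H (k + 1))
    (Z : List ℤ)
    (hZ : ∀ z : ℤ, z < 0 → Module.End.eigenspace (LieAlgebra.ad ℂ g H) ((z : ℤ) : ℂ) ≠ ⊥ →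
        z ∈ Z) :
    ∀ m ∈ fil g M H (k + 1),
      plist (LieModule.toEnd ℂ g M H) (Z.flatMap fun (z : ℤ) => L.map (· + (z : ℂ))) m
        ∈ fil g M H (k + 2) := by
  intro m hm
  refine Submodule.span_induction ?_ ?_ ?_ ?_ hm
  · rintro m ⟨x, hx, v, hv, rfl⟩
    refine Submodule.iSup_induction _
      (motive := fun y => plist (LieModule.toEnd ℂ g M H)
        (Z.flatMap fun (z : ℤ) => L.map (· + (z : ℂ))) ⁅y, v⁆ ∈ fil g M H (k + 2)) hx ?_ ?_ ?_
    · rintro ⟨z0, hz0⟩ x hx0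
      by_cases hx00 : x = 0
      · subst hx00; rw [zero_lie, map_zero]; exact Submodule.zero_mem _
      · have hbot : Module.End.eigenspace (LieAlgebra.ad ℂ g H) ((z0 : ℤ) : ℂ) ≠ ⊥ := by
          intro hb
          rw [hb] at hx0
          exact hx00 (Submodule.mem_bot ℂ |>.1 hx0)
        have hxlie : ⁅H, x⁆ = ((z0 : ℤ) : ℂ) • x := by
          have := Module.End.mem_eigenspace_iff.1 hx0
          simpa [LieAlgebra.ad_apply] using this
        have hxn : x ∈ nbar g H :=
          le_iSup (fun z : {z : ℤ // z < 0} =>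
            Module.End.eigenspace (LieAlgebra.ad ℂ g H) ((z : ℤ) : ℂ)) ⟨z0, hz0⟩ hx0
        exact flatMap_kill g M H k L hL hxn hxlie Z (hZ z0 hz0 hbot) hv
    · show plist (LieModule.toEnd ℂ g M H)
          (Z.flatMap fun (z : ℤ) => L.map (· + (z : ℂ))) ⁅(0 : g), v⁆ ∈ fil g M H (k + 2)
      rw [zero_lie, map_zero]; exact Submodule.zero_mem _
    · intro a b ha hb
      show plist (LieModule.toEnd ℂ g M H)
          (Z.flatMap fun (z : ℤ) => L.map (· + (z : ℂ))) ⁅a + b, v⁆ ∈ fil g M H (k + 2)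
      rw [add_lie, map_add]
      exact Submodule.add_mem _ ha hb
  · rw [map_zero]; exact Submodule.zero_mem _
  · intro a b _ _ ha hb
    rw [map_add]; exact Submodule.add_mem _ ha hb
  · intro c a _ ha
    rw [map_smul]; exact Submodule.smul_mem _ c ha

end KillerAux
section FGAux

variable [FiniteDimensional ℂ g]

theorem span_bracket_fg (H : g) {p : Submodule ℂ M} (hp : p.FG) :
    (Submodule.span ℂ {m : M | ∃ x ∈ nbar g H, ∃ v ∈ p, ⁅x, v⁆ = m}).FG := by
  have hset : {m : M | ∃ x ∈ nbar g H, ∃ v ∈ p, ⁅x, v⁆ = m}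
      = Set.image2 (fun x v => (LieModule.toEnd ℂ g M : g →ₗ[ℂ] Module.End ℂ M) x v)
          (nbar g H : Set g) (p : Set M) := by
    ext m
    simp only [Set.mem_image2, Set.mem_setOf_eq, LieHom.coe_toLinearMap,
      LieModule.toEnd_apply_apply, SetLike.mem_coe]
  rw [hset, ← Submodule.map₂_eq_span_image2]
  exact Submodule.FG.map₂ _ (IsNoetherian.noetherian _) hp

def Ufil (H : g) (S : Finset M) : ℕ → Submodule ℂ M
  | 0 => Submodule.span ℂ (S : Set M)
  | j + 1 => Submodule.span ℂ {m : M | ∃ x ∈ nbar g H, ∃ v ∈ Ufil H S j, ⁅x, v⁆ = m}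

theorem Ufil_fg (H : g) (S : Finset M) : ∀ j, (Ufil g M H S j).FG
  | 0 => ⟨S, rfl⟩
  | j + 1 => span_bracket_fg g M H (Ufil_fg H S j)

theorem Ufil_le_fil (H : g) (S : Finset M) : ∀ j, Ufil g M H S j ≤ fil g M H j
  | 0 => le_top
  | j + 1 => Submodule.span_le.2 (by
      rintro m ⟨x, hx, v, hv, rfl⟩
      exact Submodule.subset_span ⟨x, hx, v, Ufil_le_fil H S j hv, rfl⟩)

def SSf (H : g) (S : Finset M) : ℕ → Submodule ℂ M
  | 0 => ⊥
  | k + 1 => SSf H S k ⊔ Ufil g M H S k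

theorem SSf_fg (H : g) (S : Finset M) : ∀ k, (SSf g M H S k).FG
  | 0 => Submodule.fg_bot
  | k + 1 => Submodule.FG.sup (SSf_fg H S k) (Ufil_fg g M H S k)

theorem SSf_le_succ (H : g) (S : Finset M) (k : ℕ) : SSf g M H S k ≤ SSf g M H S (k + 1) :=
  le_sup_left

theorem U0_le_SSf (H : g) (S : Finset M) : ∀ k, Ufil g M H S 0 ≤ SSf g M H S (k + 1)
  | 0 => le_sup_right
  | k + 1 => (U0_le_SSf H S k).trans (SSf_le_succ g M H S (k + 1))

theorem lie_SSf (H : g) (S : Finset M) : ∀ k, ∀ x ∈ nbar g H, ∀ a ∈ SSf g M H S k,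
    ⁅x, a⁆ ∈ SSf g M H S (k + 1)
  | 0 => by
    intro x hx a ha
    have : a = 0 := by exact (Submodule.mem_bot ℂ).1 ha
    rw [this, lie_zero]
    exact Submodule.zero_mem _
  | k + 1 => by
    intro x hx a ha
    rcases Submodule.mem_sup.1 ha with ⟨b, hb, c, hc, rfl⟩
    rw [lie_add]
    refine Submodule.add_mem _ ?_ ?_
    · exact SSf_le_succ g M H S (k + 1) (lie_SSf H S k x hx b hb)
    · exact (le_sup_right : Ufil g M H S (k + 1) ≤ SSf g M H S (k + 2))
        (Submodule.subset_span ⟨x, hx, c, hc, rfl⟩)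

theorem fil_sup_SSf_eq_top (H : g) (S : Finset M)
    (hS : ∀ W : Submodule ℂ M, (↑S : Set M) ⊆ W →
      (∀ x ∈ nbar g H, ∀ m ∈ W, ⁅x, m⁆ ∈ W) → W = ⊤) :
    ∀ k, fil g M H k ⊔ SSf g M H S k = ⊤
  | 0 => by rw [show fil g M H 0 = ⊤ from rfl, top_sup_eq]
  | k + 1 => by
    apply hS
    · intro s hs
      exact Submodule.mem_sup_right (U0_le_SSf g M H S k (Submodule.subset_span hs))
    · intro x hx m hm
      rcases Submodule.mem_sup.1 hm with ⟨a, ha, b, hb, rfl⟩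
      rw [lie_add]
      refine Submodule.add_mem _ ?_ ?_
      · exact Submodule.mem_sup_left
          (fil_succ_le g M H (k + 1) (Submodule.subset_span ⟨x, hx, a, ha, rfl⟩))
      · have h1 := lie_SSf g M H S (k + 1) x hx b hb
        have h2 : SSf g M H S (k + 2) ≤ fil g M H (k + 1) ⊔ SSf g M H S (k + 1) := by
          refine sup_le le_sup_right ?_
          exact (Ufil_le_fil g M H S (k + 1)).trans le_sup_left
        exact h2 h1

theorem finite_quot (H : g) (S : Finset M)
    (hS : ∀ W : Submodule ℂ M, (↑S : Set M) ⊆ W →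
      (∀ x ∈ nbar g H, ∀ m ∈ W, ⁅x, m⁆ ∈ W) → W = ⊤) (k : ℕ) :
    Module.Finite ℂ (M ⧸ fil g M H k) := by
  rw [Module.finite_def]
  have h0 : Submodule.map (fil g M H k).mkQ (fil g M H k) = ⊥ := by
    rw [eq_bot_iff]
    rintro y ⟨m, hm, rfl⟩
    simpa [Submodule.mkQ_apply, Submodule.Quotient.mk_eq_zero] using hm
  have h2 := congrArg (Submodule.map (fil g M H k).mkQ) (fil_sup_SSf_eq_top g M H S hS k)
  rw [Submodule.map_sup, h0, bot_sup_eq, Submodule.map_top, Submodule.range_mkQ] at h2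
  rw [← h2]
  exact Submodule.FG.map _ (SSf_fg g M H S k)

end FGAux

section Killer

open Polynomial

variable [FiniteDimensional ℂ g]

theorem exists_killer (H : g) (S : Finset M)
    (hS : ∀ W : Submodule ℂ M, (↑S : Set M) ⊆ W →
      (∀ x ∈ nbar g H, ∀ m ∈ W, ⁅x, m⁆ ∈ W) → W = ⊤) :
    ∃ r0 : ℝ, ∀ k : ℕ, ∃ L : List ℂ, (∀ β ∈ L, β.re ≤ r0 - k) ∧
      ∀ m ∈ fil g M H k, plist (LieModule.toEnd ℂ g M H) L m ∈ fil g M H (k + 1) := by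
  haveI := finite_quot g M H S hS 1
  set χ := LinearMap.charpoly (hQuot g M H 1) with hχ
  set L0 := χ.roots.toList with hL0def
  have hpOf : pOf L0 = χ := by
    have hmon : χ.Monic := LinearMap.charpoly_monic _
    have hs := (IsAlgClosed.splits χ).eq_prod_roots_of_monic hmon
    rw [pOf, hL0def]
    conv_rhs => rw [hs, ← Multiset.coe_toList χ.roots, Multiset.map_coe, Multiset.prod_coe]
  have hbase : ∀ m ∈ fil g M H 0, plist (LieModule.toEnd ℂ g M H) L0 m ∈ fil g M H 1 := by
    intro m _
    have h1 : (fil g M H 1).mkQ (plist (LieModule.toEnd ℂ g M H) L0 m) = 0 := by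
      rw [mkQ_plist]
      have hz : plist (hQuot g M H 1) L0 = 0 := by
        rw [plist, hpOf, hχ]
        exact LinearMap.aeval_self_charpoly _
      rw [hz]
      rfl
    rwa [Submodule.mkQ_apply, Submodule.Quotient.mk_eq_zero] at h1
  obtain ⟨r0, hr0⟩ := exists_re_bound L0
  obtain ⟨Z, hZneg, hZmem⟩ := exists_Zlist g H
  refine ⟨r0, ?_⟩
  intro k
  induction k with
  | zero =>
    refine ⟨L0, ?_, hbase⟩
    intro β hβ
    simpa using hr0 β hβ
  | succ k ih =>
    obtain ⟨L, hLb, hLk⟩ := ih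
    refine ⟨Z.flatMap fun (z : ℤ) => L.map (· + (z : ℂ)), ?_, step_kill g M H k L hLk Z hZmem⟩
    intro β hβ
    rw [List.mem_flatMap] at hβ
    obtain ⟨z, hz, hβ'⟩ := hβ
    rw [List.mem_map] at hβ'
    obtain ⟨γ, hγ, rfl⟩ := hβ'
    have h1 : (γ + (z : ℂ)).re = γ.re + (z : ℝ) := by simp
    have hzneg := hZneg z hz
    have h2 : (z : ℝ) ≤ -1 := by exact_mod_cast (by omega : z ≤ (-1 : ℤ))
    have h3 := hLb γ hγ
    rw [h1]
    push_cast
    linarith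

end Killer
/-- For every `α ∈ ℂ` there is `K` such that for all `k ≥ K` the canonical projection
`M/n̄^(k+1) M → M/n̄^k M` restricts to a (linear) isomorphism from the generalized
`α`-eigenspace of the endomorphism induced by `h` on `M/n̄^(k+1) M` onto the generalized
`α`-eigenspace of the endomorphism induced by `h` on `M/n̄^k M`. -/
theorem proj_bijOn_maxGenEigenspace
    [FiniteDimensional ℂ g] (H : g) (hdiag : IsIntDiagonalizable g H)
    (hFG : IsUnbarFG g M H) (α : ℂ) :
    ∃ K : ℕ, ∀ k : ℕ, K ≤ k →
      Set.BijOn (proj g M H k)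
        (Module.End.maxGenEigenspace (hQuot g M H (k + 1)) α : Set (M ⧸ fil g M H (k + 1)))
        (Module.End.maxGenEigenspace (hQuot g M H k) α : Set (M ⧸ fil g M H k)) := by
  classical
  obtain ⟨S, hS⟩ := hFG
  obtain ⟨r0, hr⟩ := exists_killer g M H S hS
  refine ⟨⌈r0 - α.re⌉₊ + 1, ?_⟩
  intro k hk
  haveI : Module.Finite ℂ (M ⧸ fil g M H (k + 1)) := finite_quot g M H S hS (k + 1)
  obtain ⟨L, hLb, hLkill⟩ := hr k
  have hLα : ∀ β ∈ L, β ≠ α := by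
    intro β hβ heq
    have h1 := hLb β hβ
    have h2 : r0 - α.re ≤ (⌈r0 - α.re⌉₊ : ℝ) := Nat.le_ceil _
    have h3 : ((⌈r0 - α.re⌉₊ + 1 : ℕ) : ℝ) ≤ (k : ℝ) := by exact_mod_cast hk
    rw [heq] at h1
    push_cast at h3
    linarith
  have hker : ∀ d ∈ Module.End.maxGenEigenspace (hQuot g M H (k + 1)) α,
      proj g M H k d = 0 → d = 0 := by
    intro d hd hd0
    obtain ⟨m, rfl⟩ := Submodule.mkQ_surjective _ d
    have hmfil : m ∈ fil g M H k := by
      have he : proj g M H k ((fil g M H (k + 1)).mkQ m) = (fil g M H k).mkQ m := by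
        simp [proj, Submodule.mapQ_apply, Submodule.mkQ_apply]
      rw [he] at hd0
      rwa [Submodule.mkQ_apply, Submodule.Quotient.mk_eq_zero] at hd0
    have hq : Polynomial.aeval (hQuot g M H (k + 1)) (pOf L) ((fil g M H (k + 1)).mkQ m)
        = 0 := by
      have : plist (hQuot g M H (k + 1)) L ((fil g M H (k + 1)).mkQ m) = 0 := by
        rw [← mkQ_plist, Submodule.mkQ_apply, Submodule.Quotient.mk_eq_zero]
        exact hLkill m hmfil
      exact this
    rw [Module.End.mem_maxGenEigenspace] at hd
    obtain ⟨N, hN⟩ := hd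
    have hNw : Polynomial.aeval (hQuot g M H (k + 1)) (pOf (List.replicate N α))
        ((fil g M H (k + 1)).mkQ m) = 0 := by
      have : plist (hQuot g M H (k + 1)) (List.replicate N α)
          ((fil g M H (k + 1)).mkQ m) = 0 := by
        rw [plist_replicate]
        exact hN
      exact this
    obtain ⟨a, b, hab⟩ := isCoprime_pow_pOf (α := α) N L hLα
    rw [← pOf_replicate N α] at hab
    have hd1 := congrArg (fun p => Polynomial.aeval (hQuot g M H (k + 1)) p
      ((fil g M H (k + 1)).mkQ m)) hab
    simp only [map_add, map_mul, map_one, LinearMap.add_apply, Module.End.mul_apply,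
      Module.End.one_apply] at hd1
    rw [hNw, hq, map_zero, map_zero, add_zero] at hd1
    exact hd1.symm
  refine ⟨?_, ?_, ?_⟩
  · intro w hw
    exact proj_mem_maxGen g M H k α hw
  · intro a ha b hb hab
    have h0 : a - b = 0 :=
      hker _ (Submodule.sub_mem _ ha hb) (by rw [map_sub, hab, sub_self])
    exact sub_eq_zero.1 h0
  · intro v hv
    obtain ⟨m, hm⟩ := Submodule.mkQ_surjective (fil g M H k) v
    set w : M ⧸ fil g M H (k + 1) := (fil g M H (k + 1)).mkQ m with hwdef
    have hproj : proj g M H k w = v := by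
      rw [hwdef, show proj g M H k ((fil g M H (k + 1)).mkQ m) = (fil g M H k).mkQ m by
        simp [proj, Submodule.mapQ_apply, Submodule.mkQ_apply]]
      exact hm
    have htop : w ∈ ⨆ μ : ℂ, Module.End.maxGenEigenspace (hQuot g M H (k + 1)) μ := by
      rw [Module.End.iSup_maxGenEigenspace_eq_top]
      trivial
    rw [Submodule.mem_iSup_iff_exists_finsupp] at htop
    obtain ⟨c, hc, hsum⟩ := htop
    refine ⟨c α, hc α, ?_⟩
    have hvsum : v = ∑ μ ∈ c.support, proj g M H k (c μ) := by
      rw [← hproj, ← hsum, map_finsuppSum]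
      rfl
    have hdisj := Module.End.independent_maxGenEigenspace (hQuot g M H k) α
    have hd1 : v - proj g M H k (c α) ∈ Module.End.maxGenEigenspace (hQuot g M H k) α :=
      Submodule.sub_mem _ hv (proj_mem_maxGen g M H k α (hc α))
    have hd2 : v - proj g M H k (c α)
        ∈ ⨆ (μ : ℂ) (_ : μ ≠ α), Module.End.maxGenEigenspace (hQuot g M H k) μ := by
      by_cases hα : α ∈ c.support
      · have hsplit := Finset.add_sum_erase c.support (fun μ => proj g M H k (c μ)) hα
        have hv2 : v - proj g M H k (c α) = ∑ μ ∈ c.support.erase α, proj g M H k (c μ) := by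
          rw [hvsum, ← hsplit]
          abel
        rw [hv2]
        refine Submodule.sum_mem _ ?_
        intro μ hμ
        exact Submodule.mem_iSup_of_mem μ (Submodule.mem_iSup_of_mem
          (Finset.mem_erase.1 hμ).1 (proj_mem_maxGen g M H k μ (hc μ)))
      · have hcα : c α = 0 := Finsupp.notMem_support_iff.1 hα
        rw [hcα, map_zero, sub_zero, hvsum]
        refine Submodule.sum_mem _ ?_
        intro μ hμ
        have hμα : μ ≠ α := by rintro rfl; exact hα hμ
        exact Submodule.mem_iSup_of_mem μ (Submodule.mem_iSup_of_mem hμα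
          (proj_mem_maxGen g M H k μ (hc μ)))
    have hz : v - proj g M H k (c α) = 0 :=
      (Submodule.mem_bot ℂ).1 (hdisj.le_bot (Submodule.mem_inf.2 ⟨hd1, hd2⟩))
    exact (sub_eq_zero.1 hz).symm

end GeomJacquet
end
end

section
/- For every m ∈ ℝ, the subspace Σ_{α ∈ ℂ, Re α > m} E_α of M̂, i.e. the internal sum of all generalized eigenspaces of ĥ whose eigenvalue has real part greater than m, is finite-dimensional. -/
set_option linter.unusedSectionVars false

noncomputable section

namespace GeomJacquet

variable (g : Type*) [LieRing g] [LieAlgebra ℂ g]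

variable (M : Type*) [AddCommGroup M] [Module ℂ M] [LieRingModule g M] [LieModule ℂ g M]

/-! ### Auxiliary lemmas -/

theorem fil_le_fil (H : g) {j k : ℕ} (h : j ≤ k) : fil g M H k ≤ fil g M H j := by
  induction k with
  | zero => simp_all
  | succ k ih =>
    rcases Nat.lt_or_ge j (k + 1) with h' | h'
    · exact (fil_succ_le g M H k).trans (ih (Nat.lt_succ_iff.mp h'))
    · have : j = k + 1 := le_antisymm h h'
      subst this; exact le_rfl

/-- The action of `H` on `M` as a linear endomorphism. -/
def DH (H : g) : Module.End ℂ M := LieModule.toEnd ℂ g M H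

theorem DH_apply (H : g) (m : M) : DH g M H m = ⁅H, m⁆ :=
  LieModule.toEnd_apply_apply ℂ g M H m

theorem fil_succ_eq (H : g) (k : ℕ) :
    fil g M H (k + 1) =
      Submodule.map₂ (LieModule.toEnd ℂ g M : g →ₗ[ℂ] Module.End ℂ M) (nbar g H) (fil g M H k) := by
  rw [Submodule.map₂_eq_span_image2]
  show Submodule.span ℂ {m : M | ∃ x ∈ nbar g H, ∃ v ∈ fil g M H k, ⁅x, v⁆ = m} = _
  congr 1

theorem exists_compl_fd [FiniteDimensional ℂ g] (H : g) (hFG : IsUnbarFG g M H) (k : ℕ) :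
    ∃ V : Submodule ℂ M, V.FG ∧ V ⊔ fil g M H k = ⊤ := by
  induction k with
  | zero => exact ⟨⊥, Submodule.fg_bot, by rw [show fil g M H 0 = ⊤ from rfl]; simp⟩
  | succ k ih =>
    obtain ⟨V, hVfg, hV⟩ := ih
    have hnbarfg : (nbar g H).FG :=
      (Submodule.fg_iff_finiteDimensional _).mpr inferInstance
    cases k with
    | zero =>
      obtain ⟨S, hS⟩ := hFG
      refine ⟨Submodule.span ℂ S, Submodule.fg_span S.finite_toSet, ?_⟩
      apply hS
      · exact fun s hs => le_sup_left (α := Submodule ℂ M) (Submodule.subset_span hs)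
      · intro x hx m _
        exact le_sup_right (α := Submodule ℂ M)
          (Submodule.subset_span ⟨x, hx, m, trivial, rfl⟩)
    | succ k =>
      set B := (LieModule.toEnd ℂ g M : g →ₗ[ℂ] Module.End ℂ M) with hB
      refine ⟨V ⊔ Submodule.map₂ B (nbar g H) V,
        hVfg.sup (hnbarfg.map₂ B hVfg), ?_⟩
      have key : fil g M H (k + 1) ≤ Submodule.map₂ B (nbar g H) V ⊔ fil g M H (k + 2) := by
        rw [fil_succ_eq]
        calc Submodule.map₂ B (nbar g H) (fil g M H k)
            ≤ Submodule.map₂ B (nbar g H) (V ⊔ fil g M H (k + 1)) :=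
              Submodule.map₂_le_map₂ le_rfl (by rw [hV]; exact le_top)
          _ = Submodule.map₂ B (nbar g H) V ⊔
                Submodule.map₂ B (nbar g H) (fil g M H (k + 1)) :=
              Submodule.map₂_sup_right ..
          _ ≤ Submodule.map₂ B (nbar g H) V ⊔ fil g M H (k + 2) := by
              rw [fil_succ_eq g M H (k + 1)]
      rw [eq_top_iff, ← hV]
      refine sup_le (le_sup_left.trans le_sup_left) (key.trans ?_)
      exact sup_le (le_sup_right.trans le_sup_left) le_sup_right

theorem finiteDimensional_quot [FiniteDimensional ℂ g] (H : g) (hFG : IsUnbarFG g M H)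
    (k : ℕ) : FiniteDimensional ℂ (M ⧸ fil g M H k) := by
  obtain ⟨V, hVfg, hV⟩ := exists_compl_fd g M H hFG k
  have hmap : Submodule.map (fil g M H k).mkQ V = ⊤ := by
    have := congrArg (Submodule.map (fil g M H k).mkQ) hV
    rwa [Submodule.map_sup, Submodule.map_top, Submodule.range_mkQ,
      show Submodule.map (fil g M H k).mkQ (fil g M H k) = ⊥ by
        rw [eq_bot_iff]
        rintro x ⟨n, hn, rfl⟩
        simpa [Submodule.mem_bot] using (Submodule.Quotient.mk_eq_zero _).mpr hn,
      sup_bot_eq] at this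
  have : (⊤ : Submodule ℂ (M ⧸ fil g M H k)).FG := hmap ▸ hVfg.map _
  exact Module.finite_def.mpr this

theorem hQuot_mk (H : g) (k : ℕ) (m : M) :
    hQuot g M H k (Submodule.Quotient.mk m) = Submodule.Quotient.mk ⁅H, m⁆ := by
  simp [hQuot, Submodule.mapQ_apply, LieModule.toEnd_apply_apply]

/-- Projection between the quotients of the filtration. -/
def projLE (H : g) {k j : ℕ} (h : k ≤ j) :
    (M ⧸ fil g M H j) →ₗ[ℂ] M ⧸ fil g M H k :=
  Submodule.mapQ _ _ LinearMap.id (fun _ hm => fil_le_fil g M H h hm)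

theorem projLE_mk (H : g) {k j : ℕ} (h : k ≤ j) (m : M) :
    projLE g M H h (Submodule.Quotient.mk m) = Submodule.Quotient.mk m := by
  simp [projLE, Submodule.mapQ_apply]

theorem completion_projLE (H : g) (v : completion g M H) {k j : ℕ} (h : k ≤ j) :
    projLE g M H h (v.1 j) = v.1 k := by
  induction j with
  | zero =>
    have : k = 0 := Nat.le_zero.mp h
    subst this
    obtain ⟨m, hm⟩ := Submodule.Quotient.mk_surjective _ (v.1 0)
    rw [← hm, projLE_mk]
  | succ j ih =>
    rcases Nat.lt_or_ge k (j + 1) with h' | h'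
    · have hkj : k ≤ j := Nat.lt_succ_iff.mp h'
      have hproj := v.2 j
      obtain ⟨m, hm⟩ := Submodule.Quotient.mk_surjective _ (v.1 (j + 1))
      have h1 : v.1 j = Submodule.Quotient.mk m := by
        rw [← hproj, ← hm]; simp [proj, Submodule.mapQ_apply]
      rw [← ih hkj, h1, ← hm, projLE_mk, projLE_mk]
    · have : k = j + 1 := le_antisymm h h'
      subst this
      obtain ⟨m, hm⟩ := Submodule.Quotient.mk_surjective _ (v.1 (j + 1))
      rw [← hm, projLE_mk]

theorem interPow {X Y : Type*} [AddCommGroup X] [Module ℂ X] [AddCommGroup Y] [Module ℂ Y]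
    (f : X →ₗ[ℂ] Y) (A : Module.End ℂ X) (B : Module.End ℂ Y)
    (hc : ∀ x, f (A x) = B (f x)) (α : ℂ) (N : ℕ) (x : X) :
    f (((A - α • 1) ^ N) x) = ((B - α • 1) ^ N) (f x) := by
  induction N generalizing x with
  | zero => simp
  | succ n ih =>
    have h1 : f ((A - α • 1) x) = (B - α • 1) (f x) := by
      simp [LinearMap.sub_apply, map_sub, map_smul, hc]
    rw [pow_succ, Module.End.mul_apply, ih, h1, ← Module.End.mul_apply, ← pow_succ]

theorem mem_maxGen_map {X Y : Type*} [AddCommGroup X] [Module ℂ X] [AddCommGroup Y]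
    [Module ℂ Y] (f : X →ₗ[ℂ] Y) (A : Module.End ℂ X) (B : Module.End ℂ Y)
    (hc : ∀ x, f (A x) = B (f x)) {α : ℂ} {x : X}
    (hx : x ∈ A.maxGenEigenspace α) : f x ∈ B.maxGenEigenspace α := by
  rw [Module.End.mem_maxGenEigenspace] at hx ⊢
  obtain ⟨N, hN⟩ := hx
  exact ⟨N, by rw [← interPow f A B hc, hN, map_zero]⟩

theorem exists_c [FiniteDimensional ℂ g] (H : g) (hFG : IsUnbarFG g M H) :
    ∃ c : ℝ, ∀ α : ℂ, (hQuot g M H 1).maxGenEigenspace α ≠ ⊥ → α.re ≤ c := by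
  haveI := finiteDimensional_quot g M H hFG 1
  have hfin : {α : ℂ | (hQuot g M H 1).maxGenEigenspace α ≠ ⊥}.Finite :=
    WellFoundedGT.finite_ne_bot_of_iSupIndep
      (Module.End.independent_maxGenEigenspace (hQuot g M H 1))
  obtain ⟨c, hc⟩ := (hfin.image Complex.re).bddAbove
  exact ⟨c, fun α hα => hc (Set.mem_image_of_mem _ hα)⟩

theorem graded_bound [FiniteDimensional ℂ g] (H : g) (hFG : IsUnbarFG g M H)
    {c : ℝ} (hc : ∀ α : ℂ, (hQuot g M H 1).maxGenEigenspace α ≠ ⊥ → α.re ≤ c) :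
    ∀ j : ℕ, Submodule.map (fil g M H (j + 1)).mkQ (fil g M H j) ≤
      ⨆ β : {β : ℂ // β.re ≤ c - j}, (hQuot g M H (j + 1)).maxGenEigenspace β := by
  intro j
  induction j with
  | zero =>
    haveI := finiteDimensional_quot g M H hFG 1
    have htop : Submodule.map (fil g M H 1).mkQ (fil g M H 0) = ⊤ := by
      rw [show fil g M H 0 = ⊤ from rfl, Submodule.map_top, Submodule.range_mkQ]
    rw [htop, ← Module.End.iSup_maxGenEigenspace_eq_top (hQuot g M H 1)]
    refine iSup_le fun β => ?_
    by_cases hβ : (hQuot g M H 1).maxGenEigenspace β = ⊥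
    · rw [hβ]; exact bot_le
    · push_cast
      exact le_iSup (fun β : {β : ℂ // β.re ≤ c - (0 : ℕ)} =>
        (hQuot g M H 1).maxGenEigenspace β) ⟨β, by simpa using hc β hβ⟩
  | succ j ih =>
    -- generators of `fil (j+2)` mapped into the quotient
    have hspan : fil g M H (j + 1) = Submodule.span ℂ
        {m : M | ∃ x ∈ nbar g H, ∃ v ∈ fil g M H j, ⁅x, v⁆ = m} := rfl
    rw [hspan, Submodule.map_span, Submodule.span_le]
    rintro _ ⟨m, ⟨x, hx, w, hw, rfl⟩, rfl⟩
    -- main claim, by induction over `x ∈ nbar`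
    have main : ∀ x ∈ nbar g H, ∀ w ∈ fil g M H j,
        ((fil g M H (j + 2)).mkQ ⁅x, w⁆ : M ⧸ fil g M H (j + 2)) ∈
        ⨆ β : {β : ℂ // β.re ≤ c - (j + 1 : ℕ)},
          (hQuot g M H (j + 2)).maxGenEigenspace β := by
      intro x hx
      refine Submodule.iSup_induction
        (motive := fun x' => ∀ w ∈ fil g M H j,
          ((fil g M H (j + 2)).mkQ ⁅x', w⁆ : M ⧸ fil g M H (j + 2)) ∈
          ⨆ β : {β : ℂ // β.re ≤ c - (j + 1 : ℕ)},
            (hQuot g M H (j + 2)).maxGenEigenspace β)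
        _ hx ?_ ?_ ?_
      · rintro ⟨z, hz⟩ x' hx' w hw
        have hx'n : x' ∈ nbar g H :=
          le_iSup (fun z : {z : ℤ // z < 0} =>
            Module.End.eigenspace (LieAlgebra.ad ℂ g H) ((z : ℤ) : ℂ)) ⟨z, hz⟩ hx'
        -- `x'` is an eigenvector of `ad H` with eigenvalue `z < 0`
        have hxz : ⁅H, x'⁆ = ((z : ℤ) : ℂ) • x' := by
          have := Module.End.mem_eigenspace_iff.mp hx'
          simpa [LieAlgebra.ad_apply] using this
        -- induction over the class of `w` in `M ⧸ fil (j+1)`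
        have hwmem : ((fil g M H (j + 1)).mkQ w : M ⧸ fil g M H (j + 1)) ∈
            ⨆ β : {β : ℂ // β.re ≤ c - j},
              (hQuot g M H (j + 1)).maxGenEigenspace β :=
          ih ⟨w, hw, rfl⟩
        have key : ∀ u : M ⧸ fil g M H (j + 1), u ∈
            (⨆ β : {β : ℂ // β.re ≤ c - j},
              (hQuot g M H (j + 1)).maxGenEigenspace β) →
            ∀ w' : M, (fil g M H (j + 1)).mkQ w' = u →
            ((fil g M H (j + 2)).mkQ ⁅x', w'⁆ : M ⧸ fil g M H (j + 2)) ∈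
            ⨆ β : {β : ℂ // β.re ≤ c - (j + 1 : ℕ)},
              (hQuot g M H (j + 2)).maxGenEigenspace β := by
          intro u hu
          refine Submodule.iSup_induction
            (motive := fun u => ∀ w' : M, (fil g M H (j + 1)).mkQ w' = u →
              ((fil g M H (j + 2)).mkQ ⁅x', w'⁆ : M ⧸ fil g M H (j + 2)) ∈
              ⨆ β : {β : ℂ // β.re ≤ c - (j + 1 : ℕ)},
                (hQuot g M H (j + 2)).maxGenEigenspace β)
            _ hu ?_ ?_ ?_
          · rintro ⟨β, hβ⟩ u hu w' hw'
            rw [Module.End.mem_maxGenEigenspace] at hu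
            obtain ⟨N, hN⟩ := hu
            -- `(D - β)^N w' ∈ fil (j+1)`
            have hcomm1 : ∀ m : M, (fil g M H (j + 1)).mkQ (DH g M H m) =
                hQuot g M H (j + 1) ((fil g M H (j + 1)).mkQ m) := by
              intro m
              rw [DH_apply]
              exact (hQuot_mk g M H (j + 1) m).symm
            have hr : ((DH g M H - β • 1) ^ N) w' ∈ fil g M H (j + 1) := by
              rw [← Submodule.Quotient.mk_eq_zero]
              have := interPow ((fil g M H (j + 1)).mkQ) (DH g M H)
                (hQuot g M H (j + 1)) hcomm1 β N w'
              rw [show ((fil g M H (j+1)).mkQ (((DH g M H - β • 1) ^ N) w') :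
                  M ⧸ fil g M H (j+1)) =
                  Submodule.Quotient.mk (((DH g M H - β • 1) ^ N) w') from rfl] at this
              rw [this, hw', hN]
            -- the bracket identity
            have single : ∀ u' : M,
                (DH g M H - (β + (z : ℤ)) • 1) ⁅x', u'⁆ =
                ⁅x', (DH g M H - β • 1) u'⁆ := by
              intro u'
              have hD : DH g M H ⁅x', u'⁆ =
                  ((z : ℤ) : ℂ) • ⁅x', u'⁆ + ⁅x', DH g M H u'⁆ := by
                rw [DH_apply, DH_apply, leibniz_lie, hxz, smul_lie]
              simp only [LinearMap.sub_apply, LinearMap.smul_apply,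
                Module.End.one_apply, hD, lie_sub, lie_smul, add_smul,
                LinearMap.add_apply]
              abel
            have brpow : ∀ n : ℕ, ∀ u' : M,
                (((DH g M H - (β + (z : ℤ)) • 1) ^ n)) ⁅x', u'⁆ =
                ⁅x', ((DH g M H - β • 1) ^ n) u'⁆ := by
              intro n
              induction n with
              | zero => intro u'; simp
              | succ n ihn =>
                intro u'
                rw [pow_succ', Module.End.mul_apply, ihn, single,
                  ← Module.End.mul_apply, ← pow_succ']
            -- conclude: the class of `⁅x', w'⁆` is a generalized eigenvector
            have hmem : ((fil g M H (j + 2)).mkQ ⁅x', w'⁆ : M ⧸ fil g M H (j + 2)) ∈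
                (hQuot g M H (j + 2)).maxGenEigenspace (β + (z : ℤ)) := by
              rw [Module.End.mem_maxGenEigenspace]
              refine ⟨N, ?_⟩
              have hcomm2 : ∀ m : M, (fil g M H (j + 2)).mkQ (DH g M H m) =
                  hQuot g M H (j + 2) ((fil g M H (j + 2)).mkQ m) := by
                intro m
                rw [DH_apply]
                exact (hQuot_mk g M H (j + 2) m).symm
              rw [← interPow ((fil g M H (j + 2)).mkQ) (DH g M H)
                (hQuot g M H (j + 2)) hcomm2 (β + (z : ℤ)) N ⁅x', w'⁆, brpow]
              rw [show ((fil g M H (j+2)).mkQ ⁅x', ((DH g M H - β • 1) ^ N) w'⁆ :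
                  M ⧸ fil g M H (j+2)) =
                  Submodule.Quotient.mk ⁅x', ((DH g M H - β • 1) ^ N) w'⁆ from rfl]
              rw [Submodule.Quotient.mk_eq_zero]
              exact Submodule.subset_span ⟨x', hx'n, _, hr, rfl⟩
            have hre : (β + ((z : ℤ) : ℂ)).re ≤ c - (j + 1 : ℕ) := by
              have hz1 : (z : ℝ) ≤ -1 := by exact_mod_cast (by omega : z ≤ -1)
              have : (β + ((z : ℤ) : ℂ)).re = β.re + (z : ℝ) := by
                simp [Complex.add_re]
              rw [this]
              push_cast
              linarith
            exact le_iSup (fun β : {β : ℂ // β.re ≤ c - (j + 1 : ℕ)} =>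
              (hQuot g M H (j + 2)).maxGenEigenspace β) ⟨_, hre⟩ hmem
          · intro w' hw'
            have : w' ∈ fil g M H (j + 1) := by
              rwa [show ((fil g M H (j+1)).mkQ w' : M ⧸ fil g M H (j+1)) =
                Submodule.Quotient.mk w' from rfl, Submodule.Quotient.mk_eq_zero] at hw'
            have hbr : ⁅x', w'⁆ ∈ fil g M H (j + 2) :=
              Submodule.subset_span ⟨x', hx'n, w', this, rfl⟩
            rw [show ((fil g M H (j+2)).mkQ ⁅x', w'⁆ : M ⧸ fil g M H (j+2)) =
              Submodule.Quotient.mk ⁅x', w'⁆ from rfl, (Submodule.Quotient.mk_eq_zero _).mpr hbr]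
            exact Submodule.zero_mem _
          · intro u₁ u₂ h₁ h₂ w' hw'
            obtain ⟨w₁, hw₁⟩ := Submodule.Quotient.mk_surjective _ u₁
            have hw₂ : (fil g M H (j + 1)).mkQ (w' - w₁) = u₂ := by
              rw [map_sub, hw']
              rw [show ((fil g M H (j+1)).mkQ w₁ : M ⧸ fil g M H (j+1)) =
                Submodule.Quotient.mk w₁ from rfl, hw₁]
              abel
            have : ⁅x', w'⁆ = ⁅x', w₁⁆ + ⁅x', w' - w₁⁆ := by
              rw [← lie_add]; congr 1; abel
            rw [this, map_add]
            exact Submodule.add_mem _ (h₁ w₁ hw₁) (h₂ (w' - w₁) hw₂)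
        exact key _ hwmem w rfl
      · intro w _
        simp only [zero_lie, map_zero]
        exact Submodule.zero_mem _
      · intro x₁ x₂ h₁ h₂ w hw
        rw [add_lie, map_add]
        exact Submodule.add_mem _ (h₁ w hw) (h₂ w hw)
    exact main x hx w hw

theorem eig_fil_bot [FiniteDimensional ℂ g] (H : g) (hFG : IsUnbarFG g M H)
    {c : ℝ} (hc : ∀ α : ℂ, (hQuot g M H 1).maxGenEigenspace α ≠ ⊥ → α.re ≤ c) :
    ∀ j k : ℕ, ∀ α : ℂ, c - k < α.re →
      ∀ u : M ⧸ fil g M H j, u ∈ (hQuot g M H j).maxGenEigenspace α →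
      u ∈ Submodule.map (fil g M H j).mkQ (fil g M H k) → u = 0 := by
  intro j
  induction j with
  | zero =>
    intro k α hα u _ _
    obtain ⟨mu, rfl⟩ := Submodule.Quotient.mk_surjective _ u
    exact (Submodule.Quotient.mk_eq_zero _).mpr Submodule.mem_top
  | succ j ihj =>
    intro k α hα u humem humap
    obtain ⟨m, hm, hmu⟩ := humap
    have hproju : proj g M H j u ∈ (hQuot g M H j).maxGenEigenspace α :=
      mem_maxGen_map (proj g M H j) (hQuot g M H (j + 1)) (hQuot g M H j)
        (fun w => proj_hQuot g M H j w) humem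
    have hprojmap : proj g M H j u ∈ Submodule.map (fil g M H j).mkQ (fil g M H k) := by
      refine ⟨m, hm, ?_⟩
      rw [← hmu]
      rw [show ((fil g M H (j+1)).mkQ m : M ⧸ fil g M H (j+1)) =
        Submodule.Quotient.mk m from rfl]
      simp [proj, Submodule.mapQ_apply]
    have hproj0 : proj g M H j u = 0 := ihj k α hα _ hproju hprojmap
    -- hence `m ∈ fil j`
    have hmj : m ∈ fil g M H j := by
      rw [← hmu] at hproj0
      rw [show ((fil g M H (j+1)).mkQ m : M ⧸ fil g M H (j+1)) =
        Submodule.Quotient.mk m from rfl] at hproj0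
      have : (proj g M H j (Submodule.Quotient.mk m) : M ⧸ fil g M H j) =
          Submodule.Quotient.mk m := by simp [proj, Submodule.mapQ_apply]
      rw [this] at hproj0
      exact (Submodule.Quotient.mk_eq_zero _).mp hproj0
    rcases Nat.lt_or_ge j (k : ℕ) with hjk | hjk
    · -- k ≥ j + 1 : `m ∈ fil (j+1)` so `u = 0`
      have : m ∈ fil g M H (j + 1) := fil_le_fil g M H hjk hm
      rw [← hmu]
      rw [show ((fil g M H (j+1)).mkQ m : M ⧸ fil g M H (j+1)) =
        Submodule.Quotient.mk m from rfl]
      exact (Submodule.Quotient.mk_eq_zero _).mpr this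
    · -- k ≤ j : use the graded bound and independence
      have hαj : c - (j : ℝ) < α.re := by
        have : (c : ℝ) - j ≤ c - k := by
          have : (k : ℝ) ≤ j := by exact_mod_cast hjk
          linarith
        linarith
      have humem2 : u ∈ ⨆ β : {β : ℂ // β.re ≤ c - j},
          (hQuot g M H (j + 1)).maxGenEigenspace β :=
        graded_bound g M H hFG hc j ⟨m, hmj, hmu⟩
      have hle : (⨆ β : {β : ℂ // β.re ≤ c - j},
          (hQuot g M H (j + 1)).maxGenEigenspace β) ≤
          ⨆ β, ⨆ (_ : β ≠ α), (hQuot g M H (j + 1)).maxGenEigenspace β := by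
        refine iSup_le fun β => ?_
        have hβα : (β : ℂ) ≠ α := by
          intro hβα
          have := β.2
          rw [hβα] at this
          linarith
        exact le_iSup₂ (f := fun β _ => (hQuot g M H (j + 1)).maxGenEigenspace β) β.1 hβα
      have hdisj := Module.End.independent_maxGenEigenspace (hQuot g M H (j + 1)) α
      exact Submodule.disjoint_def.mp hdisj u humem (hle humem2)

theorem hhat_coord_mem [FiniteDimensional ℂ g] (H : g) {α : ℂ} {v : completion g M H}
    (hv : v ∈ E g M H α) (j : ℕ) :
    v.1 j ∈ (hQuot g M H j).maxGenEigenspace α := by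
  have hcomm : ∀ w : completion g M H,
      ((LinearMap.proj j).comp (completion g M H).subtype) (hhat g M H w) =
      hQuot g M H j (((LinearMap.proj j).comp (completion g M H).subtype) w) := fun w => rfl
  exact mem_maxGen_map ((LinearMap.proj j).comp (completion g M H).subtype)
    (hhat g M H) (hQuot g M H j) hcomm hv

theorem E_component_zero [FiniteDimensional ℂ g] (H : g) (hFG : IsUnbarFG g M H)
    {c : ℝ} (hc : ∀ α : ℂ, (hQuot g M H 1).maxGenEigenspace α ≠ ⊥ → α.re ≤ c)
    {k : ℕ} {α : ℂ} (hα : c - k < α.re) {v : completion g M H}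
    (hv : v ∈ E g M H α) (h0 : v.1 k = 0) : v = 0 := by
  apply Subtype.ext
  funext j
  rcases le_or_gt j k with hjk | hjk
  · have := completion_projLE g M H v hjk
    rw [h0, map_zero] at this
    rw [← this]; rfl
  · have hkj : k ≤ j := le_of_lt hjk
    have hmem : v.1 j ∈ Submodule.map (fil g M H j).mkQ (fil g M H k) := by
      obtain ⟨m, hm⟩ := Submodule.Quotient.mk_surjective _ (v.1 j)
      refine ⟨m, ?_, hm⟩
      have := completion_projLE g M H v hkj
      rw [← hm, projLE_mk, h0] at this
      exact (Submodule.Quotient.mk_eq_zero _).mp this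
    exact eig_fil_bot g M H hFG hc j k α hα _ (hhat_coord_mem g M H hv j) hmem

theorem E_findim [FiniteDimensional ℂ g] (H : g) (hFG : IsUnbarFG g M H)
    {c : ℝ} (hc : ∀ α : ℂ, (hQuot g M H 1).maxGenEigenspace α ≠ ⊥ → α.re ≤ c)
    {k : ℕ} {α : ℂ} (hα : c - k < α.re) : FiniteDimensional ℂ (E g M H α) := by
  haveI := finiteDimensional_quot g M H hFG k
  set f : E g M H α →ₗ[ℂ] M ⧸ fil g M H k :=
    ((LinearMap.proj k).comp (completion g M H).subtype).comp (E g M H α).subtype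
  have hker : ∀ w : E g M H α, f w = 0 → w = 0 := by
    intro w hw
    have : (w : completion g M H) = 0 :=
      E_component_zero g M H hFG hc hα w.2 hw
    exact Subtype.ext this
  exact FiniteDimensional.of_injective f
    (fun a b hab => sub_eq_zero.mp (hker _ (by have h2 : f (a - b) = f a - f b := rfl; rw [h2, hab, sub_self])))

/-- For every `m ∈ ℝ`, the internal sum of all generalized eigenspaces of `ĥ` whose
eigenvalue has real part greater than `m` is a finite-dimensional subspace of `M̂`. -/
theorem sum_maxGenEigenspaces_re_gt_finiteDimensional
    [FiniteDimensional ℂ g] (H : g) (hdiag : IsIntDiagonalizable g H)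
    (hFG : IsUnbarFG g M H) (m : ℝ) :
    FiniteDimensional ℂ (⨆ α ∈ {α : ℂ | m < α.re}, E g M H α : Submodule ℂ (completion g M H)) := by
  obtain ⟨c, hc⟩ := exists_c g M H hFG
  set k : ℕ := ⌈c - m⌉₊ + 1 with hk
  have hck : c - (k : ℝ) < m := by
    have h1 : c - m ≤ (⌈c - m⌉₊ : ℝ) := Nat.le_ceil _
    have : (k : ℝ) = (⌈c - m⌉₊ : ℝ) + 1 := by push_cast [hk]; ring
    rw [this]
    linarith
  haveI := finiteDimensional_quot g M H hFG k
  -- the set of relevant eigenvalues is finite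
  have hTfin : {α : ℂ | m < α.re ∧ E g M H α ≠ ⊥}.Finite := by
    have hbig : {α : ℂ | (hQuot g M H k).maxGenEigenspace α ≠ ⊥}.Finite :=
      WellFoundedGT.finite_ne_bot_of_iSupIndep
        (Module.End.independent_maxGenEigenspace (hQuot g M H k))
    refine hbig.subset ?_
    rintro α ⟨hα1, hα2⟩
    obtain ⟨v, hv, hvne⟩ := Submodule.exists_mem_ne_zero_of_ne_bot hα2
    have hαk : c - (k : ℝ) < α.re := lt_trans hck hα1
    have hv0 : v.1 k ≠ 0 := by
      intro h0
      exact hvne (E_component_zero g M H hFG hc hαk hv h0)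
    exact Submodule.ne_bot_iff _ |>.mpr ⟨v.1 k, hhat_coord_mem g M H hv k, hv0⟩
  -- rewrite the sup as a sup over the finite set
  have heq : (⨆ α ∈ {α : ℂ | m < α.re}, E g M H α) =
      ⨆ α : {α : ℂ | m < α.re ∧ E g M H α ≠ ⊥}, E g M H α := by
    apply le_antisymm
    · refine iSup₂_le fun α hα => ?_
      by_cases hbot : E g M H α = ⊥
      · rw [hbot]; exact bot_le
      · exact le_iSup (fun β : {α : ℂ | m < α.re ∧ E g M H α ≠ ⊥} => E g M H β)
          ⟨α, hα, hbot⟩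
    · refine iSup_le fun β => ?_
      exact le_iSup₂ (f := fun α (_ : α ∈ {α : ℂ | m < α.re}) => E g M H α) β.1 β.2.1
  rw [heq]
  haveI : Finite {α : ℂ | m < α.re ∧ E g M H α ≠ ⊥} := hTfin
  haveI : ∀ β : {α : ℂ | m < α.re ∧ E g M H α ≠ ⊥},
      FiniteDimensional ℂ (E g M H β) := fun β =>
    E_findim g M H hFG hc (lt_trans hck β.2.1)
  infer_instance

end GeomJacquet
end
end
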